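/- Let σ be as above with sup v₀ = V < ∞ where v₀(r)=∫₀^r σ(t)^{-1}∫₀^t σ(s)ds dt, and suppose σ(r)² > 2V. Then for θ ∈ [-π/4, π/4], the function v(r,θ) = v₀(r) cos θ satisfies Δv(r,θ) = cos θ · (Δv₀(r)) − σ(r)^{-2} v₀(r) cos θ ≥ cos θ (1 − 1/2) ≥ √2/4, where Δ is the Laplacian of the metric dr² + σ(r)² dθ², i.e. Δu = u_rr + (σ'/σ) u_r + σ^{-2} u_θθ. -/
import Mathlib


open Set Real

/-- On the region where `σ(r)² > 2 sup v₀` and `|θ| ≤ π/4`, the function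
`v(r,θ) = v₀(r) cos θ` has Laplacian
`Δv = (Δv₀) cos θ − σ^{-2} v₀ cos θ` bounded below by `√2/4`. -/
theorem anisotropic_laplacian_lower_bound (σ v₀ : ℝ → ℝ) (V r θ : ℝ)
    (hv : ∀ s ≥ (0:ℝ), v₀ s ≤ V) (hv0 : 0 ≤ v₀ r) (hr : 0 ≤ r)
    (hσ2 : 2 * V < σ r ^ 2)
    (hΔv₀ : deriv (deriv v₀) r + (deriv σ r / σ r) * deriv v₀ r = 1)
    (hθ : θ ∈ Icc (-(π / 4)) (π / 4)) :
    Real.sqrt 2 / 4 ≤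
      (deriv (deriv v₀) r + (deriv σ r / σ r) * deriv v₀ r) * Real.cos θ
        - (σ r ^ 2)⁻¹ * v₀ r * Real.cos θ := by
  rw [hΔv₀]
  have hVr : v₀ r ≤ V := hv r hr
  have hσpos : 0 < σ r ^ 2 := lt_of_le_of_lt (by linarith) hσ2
  obtain ⟨h1, h2⟩ := hθ
  have habs : |θ| ≤ π / 4 := abs_le.mpr ⟨h1, h2⟩
  have hcos : Real.sqrt 2 / 2 ≤ Real.cos θ := by
    rw [← Real.cos_pi_div_four, ← Real.cos_abs θ]
    exact Real.cos_le_cos_of_nonneg_of_le_pi (abs_nonneg θ)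
      (by linarith [Real.pi_pos]) habs
  have hq : (σ r ^ 2)⁻¹ * v₀ r ≤ 1 / 2 := by
    rw [inv_mul_le_iff₀ hσpos]
    linarith
  have hq0 : 0 ≤ (σ r ^ 2)⁻¹ * v₀ r := by positivity
  nlinarith [Real.sqrt_nonneg 2, mul_nonneg (sub_nonneg.mpr hcos) (sub_nonneg.mpr hq)]
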